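/- arXiv:1510.03265 — 6 statements merged into one kernel-verified Lean document; each statement's English description precedes it below -/
import Mathlib

section
/- Let λ > -1/2 be a real number. For every integer k ≥ 1, ∑_{j=1}^{k} (2j+λ-1)·Γ(2j+2λ-1)/Γ(2j) = Γ(2k+2λ+1)/(2(2λ+1)·Γ(2k)). -/
/-- Lemma 2.1 (i): `∑_{j=1}^k α_j² = Γ(2k+2λ+1)/(2(2λ+1)Γ(2k))`. -/
theorem sum_alpha_sq (lam : ℝ) (hlam : lam > -1/2) (k : ℕ) (hk : 1 ≤ k) :
    ∑ j ∈ Finset.Icc 1 k,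
        (2*(j : ℝ) + lam - 1) * Real.Gamma (2*(j : ℝ) + 2*lam - 1) / Real.Gamma (2*(j : ℝ))
      = Real.Gamma (2*(k : ℝ) + 2*lam + 1) / (2*(2*lam + 1) * Real.Gamma (2*(k : ℝ))) := by
  have hl : (0:ℝ) < 2*lam + 1 := by linarith
  induction k, hk using Nat.le_induction with
  | base =>
      simp only [Finset.Icc_self, Finset.sum_singleton, Nat.cast_one]
      have gb1 : Real.Gamma (2*(1:ℝ) + 2*lam - 1) = Real.Gamma (2*lam + 1) := by
        rw [show 2*(1:ℝ) + 2*lam - 1 = 2*lam + 1 by ring]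
      have gb2 : Real.Gamma (2*(1:ℝ) + 2*lam + 1)
          = (2*lam + 2) * ((2*lam + 1) * Real.Gamma (2*lam + 1)) := by
        rw [show 2*(1:ℝ) + 2*lam + 1 = (2*lam + 2) + 1 by ring,
          Real.Gamma_add_one (by linarith),
          show (2:ℝ)*lam + 2 = (2*lam + 1) + 1 by ring,
          Real.Gamma_add_one (by linarith)]
      have gb3 : Real.Gamma (2*(1:ℝ)) = 1 := by norm_num [Real.Gamma_two]
      rw [gb1, gb2, gb3]
      field_simp
      ring
  | succ n hn ih =>
      have hn1 : (1:ℝ) ≤ (n:ℝ) := by exact_mod_cast hn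
      have hxpos : (0:ℝ) < 2*(n:ℝ) := by linarith
      have hapos : (0:ℝ) < 2*(n:ℝ) + 2*lam + 1 := by linarith
      have hG : 0 < Real.Gamma (2*(n:ℝ)) := Real.Gamma_pos_of_pos hxpos
      have hGa : 0 < Real.Gamma (2*(n:ℝ) + 2*lam + 1) := Real.Gamma_pos_of_pos hapos
      rw [Finset.sum_Icc_succ_top (by omega), ih]
      push_cast
      have g1 : Real.Gamma (2*((n:ℝ)+1) + 2*lam - 1)
          = Real.Gamma (2*(n:ℝ) + 2*lam + 1) := by
        rw [show 2*((n:ℝ)+1) + 2*lam - 1 = 2*(n:ℝ) + 2*lam + 1 by ring]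
      have g2 : Real.Gamma (2*((n:ℝ)+1))
          = (2*(n:ℝ) + 1) * (2*(n:ℝ) * Real.Gamma (2*(n:ℝ))) := by
        rw [show 2*((n:ℝ)+1) = (2*(n:ℝ) + 1) + 1 by ring,
          Real.Gamma_add_one (by linarith),
          Real.Gamma_add_one (by linarith)]
      have g3 : Real.Gamma (2*((n:ℝ)+1) + 2*lam + 1)
          = (2*(n:ℝ) + 2*lam + 2) * ((2*(n:ℝ) + 2*lam + 1)
              * Real.Gamma (2*(n:ℝ) + 2*lam + 1)) := by
        rw [show 2*((n:ℝ)+1) + 2*lam + 1 = (2*(n:ℝ) + 2*lam + 2) + 1 by ring,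
          Real.Gamma_add_one (by linarith),
          show 2*(n:ℝ) + 2*lam + 2 = (2*(n:ℝ) + 2*lam + 1) + 1 by ring,
          Real.Gamma_add_one (by linarith)]
      rw [g1, g2, g3]
      field_simp
      ring
end

section
/- Let λ > -1/2 be a real number with λ ≠ 0. For every integer k ≥ 1, ∑_{j=1}^{k} (2j+λ-2)·Γ(2j+2λ-2)/Γ(2j-1) = Γ(2k+2λ)/(2(2λ+1)·Γ(2k-1)). -/
/-- Lemma 2.2 (i): `∑_{j=1}^k α̃_j² = Γ(2k+2λ)/(2(2λ+1)Γ(2k-1))`. -/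
theorem sum_alphat_sq (lam : ℝ) (hlam : lam > -1/2) (hlam0 : lam ≠ 0) (k : ℕ) (hk : 1 ≤ k) :
    ∑ j ∈ Finset.Icc 1 k,
        (2*(j : ℝ) + lam - 2) * Real.Gamma (2*(j : ℝ) + 2*lam - 2) / Real.Gamma (2*(j : ℝ) - 1)
      = Real.Gamma (2*(k : ℝ) + 2*lam) / (2*(2*lam + 1) * Real.Gamma (2*(k : ℝ) - 1)) := by
  induction k, hk using Nat.le_induction with
  | base =>
    simp only [Finset.Icc_self, Finset.sum_singleton, Nat.cast_one]
    have h1 : (2:ℝ)*1 + 2*lam - 2 = 2*lam := by ring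
    have h2 : (2:ℝ)*1 + 2*lam = (2*lam+1)+1 := by ring
    have h3 : (2:ℝ)*1 - 1 = 1 := by ring
    rw [h1, h2, h3, Real.Gamma_add_one (by linarith),
      show (2:ℝ)*lam+1 = 2*lam+1 from rfl,
      Real.Gamma_add_one (by simpa using hlam0), Real.Gamma_one]
    have : (2:ℝ)*lam + 1 ≠ 0 := by linarith
    field_simp
    ring
  | succ k hk ih =>
    have hk1 : (1:ℝ) ≤ (k:ℝ) := by exact_mod_cast hk
    rw [Finset.sum_Icc_succ_top (by omega), ih]
    push_cast
    have gB : Real.Gamma (2*(k:ℝ)) = (2*(k:ℝ)-1) * Real.Gamma (2*(k:ℝ)-1) := by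
      have h := Real.Gamma_add_one (show 2*(k:ℝ)-1 ≠ 0 by linarith)
      rw [show 2*(k:ℝ)-1+1 = 2*(k:ℝ) from by ring] at h
      exact h
    have g1 : Real.Gamma (2*((k:ℝ)+1) + 2*lam - 2) = Real.Gamma (2*(k:ℝ) + 2*lam) := by
      ring_nf
    have g2 : Real.Gamma (2*((k:ℝ)+1) - 1)
        = (2*(k:ℝ)) * ((2*(k:ℝ)-1) * Real.Gamma (2*(k:ℝ)-1)) := by
      have h := Real.Gamma_add_one (show 2*(k:ℝ) ≠ 0 by linarith)
      rw [show 2*(k:ℝ)+1 = 2*((k:ℝ)+1) - 1 from by ring, gB] at h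
      exact h
    have gA : Real.Gamma (2*(k:ℝ)+2*lam+1)
        = (2*(k:ℝ)+2*lam) * Real.Gamma (2*(k:ℝ)+2*lam) := by
      have h := Real.Gamma_add_one (show 2*(k:ℝ)+2*lam ≠ 0 by linarith)
      exact h
    have g3 : Real.Gamma (2*((k:ℝ)+1) + 2*lam)
        = (2*(k:ℝ)+2*lam+1) * ((2*(k:ℝ)+2*lam) * Real.Gamma (2*(k:ℝ)+2*lam)) := by
      have h := Real.Gamma_add_one (show 2*(k:ℝ)+2*lam+1 ≠ 0 by linarith)
      rw [show 2*(k:ℝ)+2*lam+1+1 = 2*((k:ℝ)+1) + 2*lam from by ring, gA] at h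
      exact h
    rw [g1, g2, g3]
    have hb : Real.Gamma (2*(k:ℝ)-1) > 0 := Real.Gamma_pos_of_pos (by linarith)
    have ha : Real.Gamma (2*(k:ℝ)+2*lam) > 0 := Real.Gamma_pos_of_pos (by linarith)
    have h1 : (2:ℝ)*lam + 1 ≠ 0 := by linarith
    have h2 : (2:ℝ)*(k:ℝ) ≠ 0 := by linarith
    have h3 : (2:ℝ)*(k:ℝ) - 1 ≠ 0 := by linarith
    field_simp
    ring
end

section
/- Let λ > -1/2 be a real number with λ ≠ 0. For every integer k ≥ 1, (Γ(2k)·(2k+λ-1)/Γ(2k+2λ-1)) · ∑_{j=1}^{k} (2j+λ-2)·Γ(2j+2λ-2)/Γ(2j-1) = (2k-1)(2k+λ-1)(2k+2λ-1)/(2(2λ+1)). -/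
lemma sum_alphat_aux (lam : ℝ) (hlam : lam > -1/2) (hlam0 : lam ≠ 0)
    (k : ℕ) (hk : 1 ≤ k) :
    ∑ j ∈ Finset.Icc 1 k,
        (2*(j : ℝ) + lam - 2) * Real.Gamma (2*(j : ℝ) + 2*lam - 2) / Real.Gamma (2*(j : ℝ) - 1)
      = (2*(k : ℝ) - 1)*(2*(k : ℝ) + 2*lam - 1) / (2*(2*lam + 1))
          * (Real.Gamma (2*(k : ℝ) + 2*lam - 1) / Real.Gamma (2*(k : ℝ))) := by
  have h2l1 : (2*lam+1:ℝ) ≠ 0 := by intro h; nlinarith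
  induction k, hk using Nat.le_induction with
  | base =>
      have h2l : (2:ℝ)*lam ≠ 0 := by
        intro h; exact hlam0 (by linarith [(mul_eq_zero.mp h).resolve_left two_ne_zero])
      simp only [Finset.Icc_self, Finset.sum_singleton, Nat.cast_one]
      have e1 : (2:ℝ)*1 + 2*lam - 1 = 2*lam + 1 := by ring
      have e2 : (2:ℝ)*1 + 2*lam - 2 = 2*lam := by ring
      have e3 : (2:ℝ)*1 - 1 = 1 := by ring
      rw [e1, e2, e3, Real.Gamma_one, Real.Gamma_add_one h2l,
        show (2:ℝ)*1 = 2 by ring, Real.Gamma_two]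
      field_simp
      ring
  | succ k hk ih =>
      have hk1 : (1:ℝ) ≤ (k:ℝ) := by exact_mod_cast hk
      have hGk : 0 < Real.Gamma (2*(k:ℝ)) := Real.Gamma_pos_of_pos (by linarith)
      have hGl : 0 < Real.Gamma (2*(k:ℝ) + 2*lam - 1) :=
        Real.Gamma_pos_of_pos (by linarith)
      have hA : (0:ℝ) < 2*(k:ℝ) + 2*lam - 1 := by linarith
      have hB : (0:ℝ) < 2*(k:ℝ) + 2*lam := by linarith
      have hkne : (2*(k:ℝ)) ≠ 0 := by positivity
      rw [Finset.sum_Icc_succ_top (by omega : 1 ≤ k+1), ih]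
      push_cast
      have h1 : Real.Gamma (2*((k:ℝ)+1)+2*lam-2)
          = (2*(k:ℝ)+2*lam-1)*Real.Gamma (2*(k:ℝ)+2*lam-1) := by
        rw [show 2*((k:ℝ)+1)+2*lam-2 = (2*(k:ℝ)+2*lam-1)+1 by ring,
          Real.Gamma_add_one hA.ne']
      have h2 : Real.Gamma (2*((k:ℝ)+1)-1) = (2*(k:ℝ))*Real.Gamma (2*(k:ℝ)) := by
        rw [show 2*((k:ℝ)+1)-1 = (2*(k:ℝ))+1 by ring, Real.Gamma_add_one hkne]
      have h3 : Real.Gamma (2*((k:ℝ)+1)+2*lam-1)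
          = (2*(k:ℝ)+2*lam)*((2*(k:ℝ)+2*lam-1)*Real.Gamma (2*(k:ℝ)+2*lam-1)) := by
        have hm : Real.Gamma (2*(k:ℝ)+2*lam) = (2*(k:ℝ)+2*lam-1)*Real.Gamma (2*(k:ℝ)+2*lam-1) := by
          rw [show 2*(k:ℝ)+2*lam = (2*(k:ℝ)+2*lam-1)+1 by ring, Real.Gamma_add_one hA.ne']; norm_num
        rw [show 2*((k:ℝ)+1)+2*lam-1 = (2*(k:ℝ)+2*lam)+1 by ring,
          Real.Gamma_add_one hB.ne', hm]
      have h4 : Real.Gamma (2*((k:ℝ)+1))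
          = (2*(k:ℝ)+1)*((2*(k:ℝ))*Real.Gamma (2*(k:ℝ))) := by
        rw [show 2*((k:ℝ)+1) = (2*(k:ℝ)+1)+1 by ring,
          Real.Gamma_add_one (by positivity : (2*(k:ℝ)+1) ≠ 0),
          Real.Gamma_add_one hkne]
      rw [h1, h2, h3, h4]
      field_simp
      ring

/-- Lemma 2.2 (ii): `β̃_k² ∑_{j=1}^k α̃_j² = (2k-1)(2k+λ-1)(2k+2λ-1)/(2(2λ+1))`. -/
theorem betat_sq_mul_sum_alphat_sq (lam : ℝ) (hlam : lam > -1/2) (hlam0 : lam ≠ 0)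
    (k : ℕ) (hk : 1 ≤ k) :
    (Real.Gamma (2*(k : ℝ)) * (2*(k : ℝ) + lam - 1) / Real.Gamma (2*(k : ℝ) + 2*lam - 1)) *
      ∑ j ∈ Finset.Icc 1 k,
        (2*(j : ℝ) + lam - 2) * Real.Gamma (2*(j : ℝ) + 2*lam - 2) / Real.Gamma (2*(j : ℝ) - 1)
      = (2*(k : ℝ) - 1)*(2*(k : ℝ) + lam - 1)*(2*(k : ℝ) + 2*lam - 1) / (2*(2*lam + 1)) := by
  have hk1 : (1:ℝ) ≤ (k:ℝ) := by exact_mod_cast hk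
  have hGk : 0 < Real.Gamma (2*(k:ℝ)) := Real.Gamma_pos_of_pos (by linarith)
  have hGl : 0 < Real.Gamma (2*(k:ℝ) + 2*lam - 1) := Real.Gamma_pos_of_pos (by linarith)
  have h2l1 : (2*lam+1:ℝ) ≠ 0 := by intro h; nlinarith
  rw [sum_alphat_aux lam hlam hlam0 k hk]
  field_simp
  rw [div_eq_iff (by rw [show 2*((k:ℝ)+lam)-1 = 2*(k:ℝ)+2*lam-1 by ring]; exact hGl.ne')]
  ring
end

section
/- Let λ > -1/2 and let k, i be integers with 1 ≤ k ≤ i. Set β_k = (Γ(2k+1)(2k+λ)/Γ(2k+2λ))^(1/2), S_k = Γ(2k+2λ+1)/(2(2λ+1)Γ(2k)), β̃_k = (Γ(2k)(2k+λ-1)/Γ(2k+2λ-1))^(1/2), and S̃_k = Γ(2k+2λ)/(2(2λ+1)Γ(2k-1)). Then β̃_k·β̃_i·S̃_k < β_k·β_i·S_k. -/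
/-- `β_k = (Γ(2k+1)(2k+λ)/Γ(2k+2λ))^{1/2}`. -/
noncomputable def betaCoef (lam : ℝ) (k : ℕ) : ℝ :=
  Real.sqrt (Real.Gamma (2*(k : ℝ) + 1) * (2*(k : ℝ) + lam) / Real.Gamma (2*(k : ℝ) + 2*lam))

/-- `S_k = Γ(2k+2λ+1)/(2(2λ+1)Γ(2k))`. -/
noncomputable def sCoef (lam : ℝ) (k : ℕ) : ℝ :=
  Real.Gamma (2*(k : ℝ) + 2*lam + 1) / (2*(2*lam + 1) * Real.Gamma (2*(k : ℝ)))

/-- `β̃_k = (Γ(2k)(2k+λ-1)/Γ(2k+2λ-1))^{1/2}`. -/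
noncomputable def betatCoef (lam : ℝ) (k : ℕ) : ℝ :=
  Real.sqrt (Real.Gamma (2*(k : ℝ)) * (2*(k : ℝ) + lam - 1) / Real.Gamma (2*(k : ℝ) + 2*lam - 1))

/-- `S̃_k = Γ(2k+2λ)/(2(2λ+1)Γ(2k-1))`. -/
noncomputable def stCoef (lam : ℝ) (k : ℕ) : ℝ :=
  Real.Gamma (2*(k : ℝ) + 2*lam) / (2*(2*lam + 1) * Real.Gamma (2*(k : ℝ) - 1))

private lemma key_poly (a b lam : ℝ) (hlam : -1/2 < lam) (ha : 2 ≤ a) (hab : a ≤ b) :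
    (a-1)*(b+lam-1)*(b+2*lam-1) < b*(b+lam)*(a+2*lam) := by
  nlinarith [mul_nonneg (sub_nonneg.2 hab) (by linarith : (0:ℝ) ≤ 2*lam+1),
    mul_pos (by linarith : (0:ℝ) < b+lam) (by linarith : (0:ℝ) < 2*lam+1),
    mul_nonneg (mul_nonneg (sub_nonneg.2 hab) (by linarith : (0:ℝ) ≤ b+lam)) (by linarith : (0:ℝ) ≤ 2*lam+1),
    sq_nonneg (2*lam+1), sq_nonneg (b-a)]

private lemma sqrt_helper (x y c : ℝ) (hx : 0 ≤ x) (hy : 0 ≤ y) (hc : 0 ≤ c) :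
    Real.sqrt x * Real.sqrt y * c = Real.sqrt (x * y * c^2) := by
  rw [Real.sqrt_mul (mul_nonneg hx hy), Real.sqrt_mul hx, Real.sqrt_sq hc]

set_option maxHeartbeats 1200000 in
/-- Left inequality in (3.2): `ã_{k,i} < a_{k,i}` for `1 ≤ k ≤ i`. -/
theorem entry_lt_left (lam : ℝ) (hlam : lam > -1/2) (k i : ℕ) (hk : 1 ≤ k) (hki : k ≤ i) :
    betatCoef lam k * betatCoef lam i * stCoef lam k
      < betaCoef lam k * betaCoef lam i * sCoef lam k := by
  simp only [betaCoef, betatCoef, sCoef, stCoef]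
  set a : ℝ := 2*(k:ℝ) with hadef
  set b : ℝ := 2*(i:ℝ) with hbdef
  have ha2 : (2:ℝ) ≤ a := by
    rw [hadef]; have : (1:ℝ) ≤ (k:ℝ) := by exact_mod_cast hk
    linarith
  have hab : a ≤ b := by
    rw [hadef, hbdef]; have : (k:ℝ) ≤ (i:ℝ) := by exact_mod_cast hki
    linarith
  have hb2 : (2:ℝ) ≤ b := le_trans ha2 hab
  have hlam' : (0:ℝ) < 2*lam + 1 := by linarith
  have ha1 : (0:ℝ) < a - 1 := by linarith
  have hb1 : (0:ℝ) < b - 1 := by linarith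
  have ha0 : (0:ℝ) < a := by linarith
  have hb0 : (0:ℝ) < b := by linarith
  have hag : (0:ℝ) < a + 2*lam - 1 := by linarith
  have hbg : (0:ℝ) < b + 2*lam - 1 := by linarith
  have hag2 : (0:ℝ) < a + 2*lam := by linarith
  have hal1 : (0:ℝ) < a + lam - 1 := by linarith
  have hbl1 : (0:ℝ) < b + lam - 1 := by linarith
  have hal : (0:ℝ) < a + lam := by linarith
  have hbl : (0:ℝ) < b + lam := by linarith
  -- Gamma recurrences
  have e1 : Real.Gamma (a + 1) = a * Real.Gamma a := Real.Gamma_add_one (ne_of_gt ha0)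
  have e2 : Real.Gamma a = (a-1) * Real.Gamma (a-1) := by
    have h := Real.Gamma_add_one (s := a - 1) (ne_of_gt ha1)
    rw [show a - 1 + 1 = a by ring] at h
    exact h
  have e3 : Real.Gamma (a + 2*lam) = (a + 2*lam - 1) * Real.Gamma (a + 2*lam - 1) := by
    have h := Real.Gamma_add_one (s := a + 2*lam - 1) (ne_of_gt hag)
    rw [show a + 2*lam - 1 + 1 = a + 2*lam by ring] at h
    exact h
  have e4 : Real.Gamma (a + 2*lam + 1) = (a + 2*lam) * Real.Gamma (a + 2*lam) :=
    Real.Gamma_add_one (ne_of_gt hag2)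
  have e5 : Real.Gamma (b + 1) = b * Real.Gamma b := Real.Gamma_add_one (ne_of_gt hb0)
  have e6 : Real.Gamma b = (b-1) * Real.Gamma (b-1) := by
    have h := Real.Gamma_add_one (s := b - 1) (ne_of_gt hb1)
    rw [show b - 1 + 1 = b by ring] at h
    exact h
  have e7 : Real.Gamma (b + 2*lam) = (b + 2*lam - 1) * Real.Gamma (b + 2*lam - 1) := by
    have h := Real.Gamma_add_one (s := b + 2*lam - 1) (ne_of_gt hbg)
    rw [show b + 2*lam - 1 + 1 = b + 2*lam by ring] at h
    exact h
  rw [e1, e4, e3, e2, e5, e7, e6]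
  set g1 : ℝ := Real.Gamma (a - 1) with hg1
  set g2 : ℝ := Real.Gamma (a + 2*lam - 1) with hg2
  set g3 : ℝ := Real.Gamma (b - 1) with hg3
  set g4 : ℝ := Real.Gamma (b + 2*lam - 1) with hg4
  have hg1p : 0 < g1 := Real.Gamma_pos_of_pos ha1
  have hg2p : 0 < g2 := Real.Gamma_pos_of_pos hag
  have hg3p : 0 < g3 := Real.Gamma_pos_of_pos hb1
  have hg4p : 0 < g4 := Real.Gamma_pos_of_pos hbg
  have hg1ne : g1 ≠ 0 := ne_of_gt hg1p
  have hg2ne : g2 ≠ 0 := ne_of_gt hg2p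
  have hg3ne : g3 ≠ 0 := ne_of_gt hg3p
  have hg4ne : g4 ≠ 0 := ne_of_gt hg4p
  have hagne : a + 2*lam - 1 ≠ 0 := ne_of_gt hag
  have hbgne : b + 2*lam - 1 ≠ 0 := ne_of_gt hbg
  have ha1ne : a - 1 ≠ 0 := ne_of_gt ha1
  have hlamne : 2*lam + 1 ≠ 0 := ne_of_gt hlam'
  -- the four radicands / scalars
  have hX1 : (0:ℝ) ≤ (a-1) * g1 * (a + lam - 1) / g2 :=
    le_of_lt (div_pos (mul_pos (mul_pos ha1 hg1p) hal1) hg2p)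
  have hX2 : (0:ℝ) ≤ (b-1) * g3 * (b + lam - 1) / g4 :=
    le_of_lt (div_pos (mul_pos (mul_pos hb1 hg3p) hbl1) hg4p)
  have hY1 : (0:ℝ) ≤ a * ((a-1) * g1) * (a + lam) / ((a + 2*lam - 1) * g2) :=
    le_of_lt (div_pos (mul_pos (mul_pos ha0 (mul_pos ha1 hg1p)) hal) (mul_pos hag hg2p))
  have hY2 : (0:ℝ) ≤ b * ((b-1) * g3) * (b + lam) / ((b + 2*lam - 1) * g4) :=
    le_of_lt (div_pos (mul_pos (mul_pos hb0 (mul_pos hb1 hg3p)) hbl) (mul_pos hbg hg4p))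
  have hc1 : (0:ℝ) ≤ (a + 2*lam - 1) * g2 / (2 * (2*lam + 1) * g1) :=
    le_of_lt (div_pos (mul_pos hag hg2p) (by positivity))
  have hc2 : (0:ℝ) ≤ (a + 2*lam) * ((a + 2*lam - 1) * g2) / (2 * (2*lam + 1) * ((a-1) * g1)) :=
    le_of_lt (div_pos (mul_pos hag2 (mul_pos hag hg2p)) (by positivity))
  rw [sqrt_helper _ _ _ hX1 hX2 hc1, sqrt_helper _ _ _ hY1 hY2 hc2]
  apply Real.sqrt_lt_sqrt
  · have := mul_nonneg (mul_nonneg hX1 hX2) (sq_nonneg ((a + 2*lam - 1) * g2 / (2 * (2*lam + 1) * g1)))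
    simpa [sq] using this
  -- reduce to the polynomial inequality
  set K : ℝ := (b-1) * (a + 2*lam - 1) * g2 * g3 / (4 * (2*lam+1)^2 * g1 * g4 * (b + 2*lam - 1) * (a-1)) with hK
  have hKpos : 0 < K := by
    rw [hK]
    exact div_pos (by positivity) (by positivity)
  have eqL : (a-1) * g1 * (a + lam - 1) / g2 * ((b-1) * g3 * (b + lam - 1) / g4) *
      ((a + 2*lam - 1) * g2 / (2 * (2*lam + 1) * g1))^2
      = K * (((a-1)*(a+lam-1)*(a+2*lam-1)) * ((a-1)*(b+lam-1)*(b+2*lam-1))) := by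
    rw [hK]
    field_simp
    rw [div_eq_div_iff (pow_ne_zero 2 (by rw [mul_comm]; exact hlamne))
      (mul_ne_zero (pow_ne_zero 2 (by rw [mul_comm]; exact hlamne)) (by rw [mul_comm lam]; exact hbgne))]
    ring
  have eqR : a * ((a-1) * g1) * (a + lam) / ((a + 2*lam - 1) * g2) *
      (b * ((b-1) * g3) * (b + lam) / ((b + 2*lam - 1) * g4)) *
      ((a + 2*lam) * ((a + 2*lam - 1) * g2) / (2 * (2*lam + 1) * ((a-1) * g1)))^2
      = K * ((a*(a+lam)*(a+2*lam)) * (b*(b+lam)*(a+2*lam))) := by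
    rw [hK]
    field_simp
    ring
  rw [eqL, eqR]
  apply mul_lt_mul_of_pos_left _ hKpos
  have key1 : (a-1)*(a+lam-1)*(a+2*lam-1) < a*(a+lam)*(a+2*lam) := key_poly a a lam hlam ha2 le_rfl
  have key2 : (a-1)*(b+lam-1)*(b+2*lam-1) < b*(b+lam)*(a+2*lam) := key_poly a b lam hlam ha2 hab
  exact mul_lt_mul'' key1 key2
    (le_of_lt (mul_pos (mul_pos ha1 hal1) hag))
    (le_of_lt (mul_pos (mul_pos ha1 hbl1) hbg))
end

section
/- Let λ > -1/2 and let k, i be integers with 1 ≤ k ≤ i. Set β_k = (Γ(2k+1)(2k+λ)/Γ(2k+2λ))^(1/2), S_k = Γ(2k+2λ+1)/(2(2λ+1)Γ(2k)), β̃_k = (Γ(2k)(2k+λ-1)/Γ(2k+2λ-1))^(1/2), and S̃_k = Γ(2k+2λ)/(2(2λ+1)Γ(2k-1)). Then β_k·β_i·S_k < β̃_{k+1}·β̃_{i+1}·S̃_{k+1}. -/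
private lemma key_poly_s11 (l x y : ℝ) (hl : -1/2 < l) (hx : 2 ≤ x) (hxy : x ≤ y) :
    x^2*(y+2*l)*((x+l)*(y+l))*(x+2*l)
      < (x+1)*(x+l+1)*((y+1)*(y+l+1))*(x+2*l+1)^2 := by
  have px : 0 < x := by linarith
  have h1 : x*(x+2*l) < (x+1)*(x+2*l+1) := by nlinarith
  have h2 : x*(y+2*l) < (y+1)*(x+2*l+1) := by
    nlinarith [mul_nonneg (by linarith : (0:ℝ) ≤ 2*l+1) (by linarith : (0:ℝ) ≤ y - x)]
  have h3 : (x+l)*(y+l) < (x+l+1)*(y+l+1) := by nlinarith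
  have n1 : 0 ≤ x*(x+2*l) := mul_nonneg px.le (by linarith)
  have n2 : 0 ≤ x*(y+2*l) := mul_nonneg px.le (by linarith)
  have n3 : 0 ≤ (x+l)*(y+l) := mul_nonneg (by linarith) (by linarith)
  calc x^2*(y+2*l)*((x+l)*(y+l))*(x+2*l)
      = (x*(x+2*l))*(x*(y+2*l))*((x+l)*(y+l)) := by ring
    _ < ((x+1)*(x+2*l+1))*((y+1)*(x+2*l+1))*((x+l+1)*(y+l+1)) :=
        mul_lt_mul'' (mul_lt_mul'' h1 h2 n1 n2) h3 (mul_nonneg n1 n2) n3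
    _ = (x+1)*(x+l+1)*((y+1)*(y+l+1))*(x+2*l+1)^2 := by ring

private lemma key (l x y gx gy gX gY : ℝ) (hl : -1/2 < l) (hx : 2 ≤ x) (hxy : x ≤ y)
    (hgx : 0 < gx) (hgy : 0 < gy) (hgX : 0 < gX) (hgY : 0 < gY) :
    Real.sqrt (x*gx*(x+l)/gX) * Real.sqrt (gy*(y+l)/gY) * ((x+2*l)*gX/(2*(2*l+1)*gx))
    < Real.sqrt ((x+1)*(x*gx)*(x+l+1)/((x+2*l)*gX)) * Real.sqrt ((y+1)*gy*(y+l+1)/((y+2*l)*gY))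
      * ((x+2*l+1)*((x+2*l)*gX)/(2*(2*l+1)*(x*gx))) := by
  have p1 : 0 < 2*l+1 := by linarith
  have px : 0 < x := by linarith
  have pxl : 0 < x + l := by linarith
  have pyl : 0 < y + l := by linarith
  have px2l : 0 < x + 2*l := by linarith
  have py2l : 0 < y + 2*l := by linarith
  have ha : 0 ≤ x*gx*(x+l)/gX :=
    div_nonneg (mul_nonneg (mul_nonneg px.le hgx.le) pxl.le) hgX.le
  have hb : 0 ≤ gy*(y+l)/gY := div_nonneg (mul_nonneg hgy.le pyl.le) hgY.le
  have ha' : 0 ≤ (x+1)*(x*gx)*(x+l+1)/((x+2*l)*gX) :=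
    div_nonneg (mul_nonneg (mul_nonneg (by linarith) (mul_nonneg px.le hgx.le)) (by linarith))
      (mul_nonneg px2l.le hgX.le)
  have hb' : 0 ≤ (y+1)*gy*(y+l+1)/((y+2*l)*gY) :=
    div_nonneg (mul_nonneg (mul_nonneg (by linarith) hgy.le) (by linarith))
      (mul_nonneg py2l.le hgY.le)
  have hc' : 0 ≤ (x+2*l+1)*((x+2*l)*gX)/(2*(2*l+1)*(x*gx)) :=
    div_nonneg (mul_nonneg (by linarith) (mul_nonneg px2l.le hgX.le))
      (mul_nonneg (by linarith) (mul_nonneg px.le hgx.le))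
  refine lt_of_pow_lt_pow_left₀ 2 (mul_nonneg (mul_nonneg (Real.sqrt_nonneg _) (Real.sqrt_nonneg _)) hc') ?_
  have hK : 0 < gy * gX / (4*(2*l+1)^2 * gx * gY * (x*(y+2*l))) := by
    apply div_pos (mul_pos hgy hgX)
    have h4 : (0:ℝ) < 4*(2*l+1)^2 := by positivity
    exact mul_pos (mul_pos (mul_pos h4 hgx) hgY) (mul_pos px py2l)
  have hL2 : (Real.sqrt (x*gx*(x+l)/gX) * Real.sqrt (gy*(y+l)/gY)
        * ((x+2*l)*gX/(2*(2*l+1)*gx)))^2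
      = ((x^2*(y+2*l)*((x+l)*(y+l))*(x+2*l))*(x+2*l))
        * (gy * gX / (4*(2*l+1)^2 * gx * gY * (x*(y+2*l)))) := by
    rw [mul_pow, mul_pow, Real.sq_sqrt ha, Real.sq_sqrt hb]
    have := p1.ne'; have := py2l.ne'
    rw [div_pow, div_mul_div_comm, div_mul_div_comm, mul_div_assoc', div_eq_div_iff (by positivity) (by positivity)]
    ring
  have hR2 : (Real.sqrt ((x+1)*(x*gx)*(x+l+1)/((x+2*l)*gX))
        * Real.sqrt ((y+1)*gy*(y+l+1)/((y+2*l)*gY))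
        * ((x+2*l+1)*((x+2*l)*gX)/(2*(2*l+1)*(x*gx))))^2
      = (((x+1)*(x+l+1)*((y+1)*(y+l+1))*(x+2*l+1)^2)*(x+2*l))
        * (gy * gX / (4*(2*l+1)^2 * gx * gY * (x*(y+2*l)))) := by
    rw [mul_pow, mul_pow, Real.sq_sqrt ha', Real.sq_sqrt hb']
    field_simp
    ring
  rw [hL2, hR2]
  exact mul_lt_mul_of_pos_right
    (mul_lt_mul_of_pos_right (key_poly_s11 l x y hl hx hxy) px2l) hK

/-- Right inequality in (3.2): `a_{k,i} < ã_{k+1,i+1}` for `1 ≤ k ≤ i`. -/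
theorem entry_lt_right (lam : ℝ) (hlam : lam > -1/2) (k i : ℕ) (hk : 1 ≤ k) (hki : k ≤ i) :
    betaCoef lam k * betaCoef lam i * sCoef lam k
      < betatCoef lam (k+1) * betatCoef lam (i+1) * stCoef lam (k+1) := by
  have hk1 : (1:ℝ) ≤ (k:ℝ) := by exact_mod_cast hk
  have hkiR : (k:ℝ) ≤ (i:ℝ) := by exact_mod_cast hki
  have hx : (2:ℝ) ≤ 2*(k:ℝ) := by linarith
  have hxy : 2*(k:ℝ) ≤ 2*(i:ℝ) := by linarith
  have h2k : (2*(k:ℝ)) ≠ 0 := by linarith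
  have h2k1 : (2*(k:ℝ)+1) ≠ 0 := by linarith
  have h2k2l : (2*(k:ℝ)+2*lam) ≠ 0 := by linarith
  have h2k2l1 : (2*(k:ℝ)+2*lam+1) ≠ 0 := by linarith
  have h2i1 : (2*(i:ℝ)+1) ≠ 0 := by linarith
  have h2i2l : (2*(i:ℝ)+2*lam) ≠ 0 := by linarith
  have e1 : betaCoef lam k
      = Real.sqrt (2*(k:ℝ)*Real.Gamma (2*(k:ℝ))*(2*(k:ℝ)+lam)/Real.Gamma (2*(k:ℝ)+2*lam)) := by
    unfold betaCoef
    rw [Real.Gamma_add_one h2k]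
  have e3 : sCoef lam k
      = (2*(k:ℝ)+2*lam)*Real.Gamma (2*(k:ℝ)+2*lam)/(2*(2*lam+1)*Real.Gamma (2*(k:ℝ))) := by
    unfold sCoef
    rw [Real.Gamma_add_one h2k2l]
  have e4 : betatCoef lam (k+1)
      = Real.sqrt ((2*(k:ℝ)+1)*(2*(k:ℝ)*Real.Gamma (2*(k:ℝ)))*(2*(k:ℝ)+lam+1)
          /((2*(k:ℝ)+2*lam)*Real.Gamma (2*(k:ℝ)+2*lam))) := by
    unfold betatCoef
    push_cast
    rw [show 2*((k:ℝ)+1)+lam-1 = 2*(k:ℝ)+lam+1 from by ring,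
        show 2*((k:ℝ)+1)+2*lam-1 = (2*(k:ℝ)+2*lam)+1 from by ring,
        show 2*((k:ℝ)+1) = (2*(k:ℝ)+1)+1 from by ring,
        Real.Gamma_add_one h2k1, Real.Gamma_add_one h2k, Real.Gamma_add_one h2k2l]
  have e5 : betatCoef lam (i+1)
      = Real.sqrt ((2*(i:ℝ)+1)*Real.Gamma (2*(i:ℝ)+1)*(2*(i:ℝ)+lam+1)
          /((2*(i:ℝ)+2*lam)*Real.Gamma (2*(i:ℝ)+2*lam))) := by
    unfold betatCoef
    push_cast
    rw [show 2*((i:ℝ)+1)+lam-1 = 2*(i:ℝ)+lam+1 from by ring,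
        show 2*((i:ℝ)+1)+2*lam-1 = (2*(i:ℝ)+2*lam)+1 from by ring,
        show 2*((i:ℝ)+1) = (2*(i:ℝ)+1)+1 from by ring,
        Real.Gamma_add_one h2i1, Real.Gamma_add_one h2i2l]
  have e6 : stCoef lam (k+1)
      = (2*(k:ℝ)+2*lam+1)*((2*(k:ℝ)+2*lam)*Real.Gamma (2*(k:ℝ)+2*lam))
          /(2*(2*lam+1)*(2*(k:ℝ)*Real.Gamma (2*(k:ℝ)))) := by
    unfold stCoef
    push_cast
    rw [show 2*((k:ℝ)+1)+2*lam = (2*(k:ℝ)+2*lam+1)+1 from by ring,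
        show 2*((k:ℝ)+1)-1 = 2*(k:ℝ)+1 from by ring,
        Real.Gamma_add_one h2k2l1, Real.Gamma_add_one h2k2l, Real.Gamma_add_one h2k]
  rw [e1, e3, e4, e5, e6]
  have pgx : 0 < Real.Gamma (2*(k:ℝ)) := Real.Gamma_pos_of_pos (by linarith)
  have pgy : 0 < Real.Gamma (2*(i:ℝ)+1) := Real.Gamma_pos_of_pos (by linarith)
  have pgX : 0 < Real.Gamma (2*(k:ℝ)+2*lam) := Real.Gamma_pos_of_pos (by linarith)
  have pgY : 0 < Real.Gamma (2*(i:ℝ)+2*lam) := Real.Gamma_pos_of_pos (by linarith)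
  have := key lam (2*(k:ℝ)) (2*(i:ℝ)) (Real.Gamma (2*(k:ℝ))) (Real.Gamma (2*(i:ℝ)+1))
    (Real.Gamma (2*(k:ℝ)+2*lam)) (Real.Gamma (2*(i:ℝ)+2*lam)) hlam hx hxy pgx pgy pgX pgY
  exact this
end

section
/- Let λ > -1/2 and m ≥ 1. Define the symmetric m×m real matrix A_m by (A_m)_{k,i} = β_k β_i S_{min(k,i)} and the symmetric matrices Ã_m (of size m×m) and Ã_{m+1} (of size (m+1)×(m+1)) by (Ã)_{k,i} = β̃_k β̃_i S̃_{min(k,i)}, where β_k = (Γ(2k+1)(2k+λ)/Γ(2k+2λ))^(1/2), S_k = Γ(2k+2λ+1)/(2(2λ+1)Γ(2k)), β̃_k = (Γ(2k)(2k+λ-1)/Γ(2k+2λ-1))^(1/2), S̃_k = Γ(2k+2λ)/(2(2λ+1)Γ(2k-1)). Then the largest eigenvalues ν̃_m, ν_m, ν̃_{m+1} of Ã_m, A_m, Ã_{m+1} (equivalently, the suprema of the quadratic forms tᵀÃ_m t, tᵀA_m t, tᵀÃ_{m+1} t over unit vectors t) satisfy 0 < ν̃_m < ν_m < ν̃_{m+1}.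 -/
open Matrix

/-- The matrix `A_m`, with `(A_m)_{k,i} = β_k β_i S_{min(k,i)}` (1-based indices). -/
noncomputable def Amat (lam : ℝ) (m : ℕ) : Matrix (Fin m) (Fin m) ℝ :=
  fun k i => betaCoef lam (k.1 + 1) * betaCoef lam (i.1 + 1) *
    sCoef lam (min (k.1 + 1) (i.1 + 1))

/-- The matrix `Ã_m`, with `(Ã_m)_{k,i} = β̃_k β̃_i S̃_{min(k,i)}` (1-based indices). -/
noncomputable def Atmat (lam : ℝ) (m : ℕ) : Matrix (Fin m) (Fin m) ℝ :=
  fun k i => betatCoef lam (k.1 + 1) * betatCoef lam (i.1 + 1) *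
    stCoef lam (min (k.1 + 1) (i.1 + 1))

/-- The largest eigenvalue of a symmetric matrix, as the supremum of its quadratic form
over the unit sphere. -/
noncomputable def maxEig {m : ℕ} (M : Matrix (Fin m) (Fin m) ℝ) : ℝ :=
  sSup {x : ℝ | ∃ t : Fin m → ℝ, (∑ j, (t j)^2) = 1 ∧ x = t ⬝ᵥ M.mulVec t}

/-! ### Auxiliary analytic lemmas -/

noncomputable def gA (lam x : ℝ) : ℝ := Real.Gamma (x+1) * (x+lam) / Real.Gamma (x+2*lam)
noncomputable def hA (lam x : ℝ) : ℝ := Real.Gamma (x+2*lam+1) / (2*(2*lam+1) * Real.Gamma x)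

lemma gA_pos {lam x : ℝ} (hlam : -1/2 < lam) (hx : 1 ≤ x) : 0 < gA lam x := by
  have h1 : 0 < Real.Gamma (x+1) := Real.Gamma_pos_of_pos (by linarith)
  have h2 : 0 < Real.Gamma (x+2*lam) := Real.Gamma_pos_of_pos (by linarith)
  have h3 : 0 < x + lam := by linarith
  unfold gA; positivity

lemma hA_pos {lam x : ℝ} (hlam : -1/2 < lam) (hx : 1 ≤ x) : 0 < hA lam x := by
  have h1 : 0 < Real.Gamma (x+2*lam+1) := Real.Gamma_pos_of_pos (by linarith)
  have h2 : 0 < Real.Gamma x := Real.Gamma_pos_of_pos (by linarith)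
  have h3 : (0:ℝ) < 2*lam+1 := by linarith
  unfold hA; positivity

lemma poly_key {lam x y : ℝ} (hlam : -1/2 < lam) (hx : 1 ≤ x) (hxy : x ≤ y) :
    x^2*(x+lam)*(x+2*lam)*(y+lam)*(y+2*lam) <
      (x+1)*(x+lam+1)*(x+2*lam+1)^2*(y+1)*(y+lam+1) := by
  have hx0 : 0 < x := by linarith
  have hy0 : 0 < y := by linarith
  have hxl : 0 < x + lam := by linarith
  have hyl : 0 < y + lam := by linarith
  have hx2l : 0 < x + 2*lam := by linarith
  have hy2l : 0 < y + 2*lam := by linarith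
  have b1 : x*(x+lam)*(x+2*lam) < (x+1)*(x+lam+1)*(x+2*lam+1) := by nlinarith
  rcases le_total lam 1 with hl | hl
  · have b2 : (y+lam)*(y+2*lam) ≤ (y+1)*(y+lam+1) := by nlinarith
    calc x^2*(x+lam)*(x+2*lam)*(y+lam)*(y+2*lam)
        = (x*(x+lam)*(x+2*lam)) * x * ((y+lam)*(y+2*lam)) := by ring
      _ < ((x+1)*(x+lam+1)*(x+2*lam+1)) * x * ((y+lam)*(y+2*lam)) := by
          apply mul_lt_mul_of_pos_right
          apply mul_lt_mul_of_pos_right b1 hx0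
          positivity
      _ ≤ ((x+1)*(x+lam+1)*(x+2*lam+1)) * (x+2*lam+1) * ((y+1)*(y+lam+1)) := by
          have h1 : x ≤ x + 2*lam + 1 := by linarith
          gcongr
      _ = (x+1)*(x+lam+1)*(x+2*lam+1)^2*(y+1)*(y+lam+1) := by ring
  · have bD : (x+1)*(x+lam+1)*((y+lam)*(y+2*lam)) ≤ (y+1)*(y+lam+1)*((x+lam)*(x+2*lam)) := by
      nlinarith [mul_nonneg (mul_nonneg (by linarith : (0:ℝ) ≤ lam - 1) (by linarith : (0:ℝ) ≤ y - x))
        (by nlinarith : (0:ℝ) ≤ 2*x*y + (2*lam+1)*(x+y) + 2*lam^2 + 3*lam)]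
    have b1' : (x*(x+lam)*(x+2*lam))^2 < ((x+1)*(x+lam+1)*(x+2*lam+1))^2 := by
      have hP : (0:ℝ) ≤ x*(x+lam)*(x+2*lam) := by positivity
      nlinarith [mul_lt_mul_of_pos_right b1 (lt_of_lt_of_le (by positivity) b1.le),
        mul_lt_mul_of_pos_left b1 (lt_of_le_of_lt hP b1)]
    have hQpos : (0:ℝ) < (x+1)*(x+lam+1)*(x+2*lam+1) := by positivity
    have h1 : (x*(x+lam)*(x+2*lam))^2 * ((y+lam)*(y+2*lam)) <
        ((x+1)*(x+lam+1)*(x+2*lam+1))^2 * ((y+lam)*(y+2*lam)) :=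
      mul_lt_mul_of_pos_right b1' (by positivity)
    have h2 : ((x+1)*(x+lam+1)*(x+2*lam+1)) * (x+2*lam+1) * ((x+1)*(x+lam+1)*((y+lam)*(y+2*lam))) ≤
        ((x+1)*(x+lam+1)*(x+2*lam+1)) * (x+2*lam+1) * ((y+1)*(y+lam+1)*((x+lam)*(x+2*lam))) := by
      apply mul_le_mul_of_nonneg_left bD (by positivity)
    have main : (x^2*(x+lam)*(x+2*lam)*(y+lam)*(y+2*lam)) * ((x+lam)*(x+2*lam)) <
        ((x+1)*(x+lam+1)*(x+2*lam+1)^2*(y+1)*(y+lam+1)) * ((x+lam)*(x+2*lam)) := by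
      linarith [h1, h2]
    exact lt_of_mul_lt_mul_right main (by positivity)

lemma key_s12 {lam x y : ℝ} (hlam : -1/2 < lam) (hx : 1 ≤ x) (hxy : x ≤ y) :
    gA lam x * gA lam y * (hA lam x)^2 < gA lam (x+1) * gA lam (y+1) * (hA lam (x+1))^2 := by
  have hy : 1 ≤ y := le_trans hx hxy
  have hxl : (0:ℝ) < x + lam := by linarith
  have hyl : (0:ℝ) < y + lam := by linarith
  have hx2l : (0:ℝ) < x + 2*lam := by linarith
  have hy2l : (0:ℝ) < y + 2*lam := by linarith
  have hx0 : (0:ℝ) < x := by linarith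
  have hxl' := ne_of_gt hxl
  have hyl' := ne_of_gt hyl
  have hx2l' := ne_of_gt hx2l
  have hy2l' := ne_of_gt hy2l
  have hx0' := ne_of_gt hx0
  have gx1 : gA lam (x+1) = gA lam x * ((x+1)*(x+lam+1)) / ((x+lam)*(x+2*lam)) := by
    unfold gA
    rw [show x+1+1 = (x+1)+1 by ring, Real.Gamma_add_one (by linarith : x+1 ≠ 0),
      show x+1+2*lam = (x+2*lam)+1 by ring, Real.Gamma_add_one hx2l']
    have h2 : Real.Gamma (x+2*lam) ≠ 0 := ne_of_gt (Real.Gamma_pos_of_pos (by linarith))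
    field_simp
    ring
  have gy1 : gA lam (y+1) = gA lam y * ((y+1)*(y+lam+1)) / ((y+lam)*(y+2*lam)) := by
    unfold gA
    rw [show y+1+1 = (y+1)+1 by ring, Real.Gamma_add_one (by linarith : y+1 ≠ 0),
      show y+1+2*lam = (y+2*lam)+1 by ring, Real.Gamma_add_one hy2l']
    have h2 : Real.Gamma (y+2*lam) ≠ 0 := ne_of_gt (Real.Gamma_pos_of_pos (by linarith))
    field_simp
    ring
  have hx1 : hA lam (x+1) = hA lam x * (x+2*lam+1) / x := by
    unfold hA
    rw [show x+1+2*lam+1 = (x+2*lam+1)+1 by ring,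
      Real.Gamma_add_one (by nlinarith : x+2*lam+1 ≠ 0), Real.Gamma_add_one hx0']
    have h2 : Real.Gamma x ≠ 0 := ne_of_gt (Real.Gamma_pos_of_pos hx0)
    have h3 : (2:ℝ)*(2*lam+1) ≠ 0 := by nlinarith
    field_simp
  have hgx := gA_pos hlam hx
  have hgy := gA_pos hlam hy
  have hhx := hA_pos hlam hx
  rw [gx1, gy1, hx1]
  have key2 := poly_key hlam hx hxy
  rw [show gA lam x * ((x+1)*(x+lam+1)) / ((x+lam)*(x+2*lam)) *
      (gA lam y * ((y+1)*(y+lam+1)) / ((y+lam)*(y+2*lam))) *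
      (hA lam x * (x+2*lam+1) / x)^2
    = (gA lam x * gA lam y * hA lam x ^2) *
      (((x+1)*(x+lam+1)*(x+2*lam+1)^2*(y+1)*(y+lam+1)) /
        (x^2*(x+lam)*(x+2*lam)*(y+lam)*(y+2*lam))) by field_simp]
  nth_rewrite 1 [show gA lam x * gA lam y * hA lam x ^2
    = (gA lam x * gA lam y * hA lam x ^2) * 1 by ring]
  apply mul_lt_mul_of_pos_left _ (by positivity)
  rw [lt_div_iff₀ (by positivity)]
  linarith [key2]

lemma sqrt_form {a b c a' b' c' : ℝ} (ha : 0 ≤ a) (hb : 0 ≤ b) (hc : 0 ≤ c)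
    (ha' : 0 ≤ a') (hb' : 0 ≤ b') (hc' : 0 ≤ c')
    (h : a*b*c^2 < a'*b'*c'^2) :
    Real.sqrt a * Real.sqrt b * c < Real.sqrt a' * Real.sqrt b' * c' := by
  have e1 : ∀ u v w : ℝ, 0 ≤ u → 0 ≤ v → 0 ≤ w →
      Real.sqrt u * Real.sqrt v * w = Real.sqrt (u*v*w^2) := by
    intro u v w hu hv hw
    rw [Real.sqrt_mul (by positivity), Real.sqrt_mul hu, Real.sqrt_sq hw]
  rw [e1 a b c ha hb hc, e1 a' b' c' ha' hb' hc']
  exact Real.sqrt_lt_sqrt (by positivity) h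

/-! ### Entrywise comparison lemmas -/

lemma betaCoef_eq (lam : ℝ) (k : ℕ) : betaCoef lam k = Real.sqrt (gA lam (2*(k:ℝ))) := rfl
lemma betatCoef_eq (lam : ℝ) (k : ℕ) : betatCoef lam k = Real.sqrt (gA lam (2*(k:ℝ)-1)) := by
  unfold betatCoef gA
  rw [show (2*(k:ℝ)-1)+1 = 2*(k:ℝ) by ring, show (2*(k:ℝ)-1)+lam = 2*(k:ℝ)+lam-1 by ring,
    show (2*(k:ℝ)-1)+2*lam = 2*(k:ℝ)+2*lam-1 by ring]
lemma sCoef_eq (lam : ℝ) (k : ℕ) : sCoef lam k = hA lam (2*(k:ℝ)) := rfl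
lemma stCoef_eq (lam : ℝ) (k : ℕ) : stCoef lam k = hA lam (2*(k:ℝ)-1) := by
  unfold stCoef hA
  rw [show (2*(k:ℝ)-1)+2*lam+1 = 2*(k:ℝ)+2*lam by ring]

lemma cast1 {k : ℕ} (hk : 1 ≤ k) : (1:ℝ) ≤ 2*(k:ℝ)-1 := by
  have : (1:ℝ) ≤ (k:ℝ) := by exact_mod_cast hk
  linarith
lemma cast2 {k : ℕ} (hk : 1 ≤ k) : (1:ℝ) ≤ 2*(k:ℝ) := by
  have : (1:ℝ) ≤ (k:ℝ) := by exact_mod_cast hk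
  linarith

lemma step1 {lam : ℝ} (hlam : -1/2 < lam) {k i : ℕ} (hk : 1 ≤ k) (hki : k ≤ i) :
    betatCoef lam k * betatCoef lam i * stCoef lam k <
      betaCoef lam k * betaCoef lam i * sCoef lam k := by
  have hi : 1 ≤ i := le_trans hk hki
  have hki' : (k:ℝ) ≤ (i:ℝ) := by exact_mod_cast hki
  rw [betatCoef_eq, betatCoef_eq, stCoef_eq, betaCoef_eq, betaCoef_eq, sCoef_eq]
  have hx := cast1 hk
  have hy : (1:ℝ) ≤ 2*(i:ℝ)-1 := cast1 hi
  have hkey := key_s12 hlam hx (by linarith : 2*(k:ℝ)-1 ≤ 2*(i:ℝ)-1)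
  rw [show 2*(k:ℝ)-1+1 = 2*(k:ℝ) by ring, show 2*(i:ℝ)-1+1 = 2*(i:ℝ) by ring] at hkey
  exact sqrt_form (gA_pos hlam hx).le (gA_pos hlam hy).le (hA_pos hlam hx).le
    (gA_pos hlam (cast2 hk)).le (gA_pos hlam (cast2 hi)).le (hA_pos hlam (cast2 hk)).le hkey

lemma step2 {lam : ℝ} (hlam : -1/2 < lam) {k i : ℕ} (hk : 1 ≤ k) (hki : k ≤ i) :
    betaCoef lam k * betaCoef lam i * sCoef lam k <
      betatCoef lam (k+1) * betatCoef lam (i+1) * stCoef lam (k+1) := by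
  have hi : 1 ≤ i := le_trans hk hki
  have hki' : (k:ℝ) ≤ (i:ℝ) := by exact_mod_cast hki
  rw [betatCoef_eq, betatCoef_eq, stCoef_eq, betaCoef_eq, betaCoef_eq, sCoef_eq]
  have e1 : 2*((k+1:ℕ):ℝ)-1 = 2*(k:ℝ)+1 := by push_cast; ring
  have e2 : 2*((i+1:ℕ):ℝ)-1 = 2*(i:ℝ)+1 := by push_cast; ring
  rw [e1, e2]
  have hx := cast2 hk
  have hy := cast2 hi
  have hkey := key_s12 hlam hx (by linarith : 2*(k:ℝ) ≤ 2*(i:ℝ))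
  exact sqrt_form (gA_pos hlam hx).le (gA_pos hlam hy).le (hA_pos hlam hx).le
    (gA_pos hlam (by linarith)).le (gA_pos hlam (by linarith)).le (hA_pos hlam (by linarith)).le hkey

lemma betaCoef_pos {lam : ℝ} (hlam : -1/2 < lam) {k : ℕ} (hk : 1 ≤ k) : 0 < betaCoef lam k := by
  rw [betaCoef_eq]; exact Real.sqrt_pos.2 (gA_pos hlam (cast2 hk))
lemma betatCoef_pos {lam : ℝ} (hlam : -1/2 < lam) {k : ℕ} (hk : 1 ≤ k) : 0 < betatCoef lam k := by
  rw [betatCoef_eq]; exact Real.sqrt_pos.2 (gA_pos hlam (cast1 hk))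
lemma sCoef_pos {lam : ℝ} (hlam : -1/2 < lam) {k : ℕ} (hk : 1 ≤ k) : 0 < sCoef lam k := by
  rw [sCoef_eq]; exact hA_pos hlam (cast2 hk)
lemma stCoef_pos {lam : ℝ} (hlam : -1/2 < lam) {k : ℕ} (hk : 1 ≤ k) : 0 < stCoef lam k := by
  rw [stCoef_eq]; exact hA_pos hlam (cast1 hk)

lemma Amat_pos {lam : ℝ} (hlam : -1/2 < lam) {m : ℕ} (k i : Fin m) : 0 < Amat lam m k i := by
  unfold Amat
  have := betaCoef_pos hlam (Nat.le_add_left 1 k.1)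
  have := betaCoef_pos hlam (Nat.le_add_left 1 i.1)
  have := sCoef_pos hlam (le_min (Nat.le_add_left 1 k.1) (Nat.le_add_left 1 i.1))
  positivity

lemma Atmat_pos {lam : ℝ} (hlam : -1/2 < lam) {m : ℕ} (k i : Fin m) : 0 < Atmat lam m k i := by
  unfold Atmat
  have := betatCoef_pos hlam (Nat.le_add_left 1 k.1)
  have := betatCoef_pos hlam (Nat.le_add_left 1 i.1)
  have := stCoef_pos hlam (le_min (Nat.le_add_left 1 k.1) (Nat.le_add_left 1 i.1))
  positivity

lemma entry1 {lam : ℝ} (hlam : -1/2 < lam) {m : ℕ} (k i : Fin m) :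
    Atmat lam m k i < Amat lam m k i := by
  unfold Atmat Amat
  rcases le_total (k.1+1) (i.1+1) with h | h
  · rw [min_eq_left h]
    exact step1 hlam (Nat.le_add_left 1 k.1) h
  · rw [min_eq_right h]
    have := step1 hlam (Nat.le_add_left 1 i.1) h
    linarith [this]

lemma entry2 {lam : ℝ} (hlam : -1/2 < lam) {m : ℕ} (k i : Fin m) :
    Amat lam m k i < Atmat lam (m+1) k.succ i.succ := by
  unfold Atmat Amat
  have hk : (k.succ : Fin (m+1)).1 = k.1 + 1 := rfl
  have hi : (i.succ : Fin (m+1)).1 = i.1 + 1 := rfl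
  rw [hk, hi]
  have hmin : min (k.1+1+1) (i.1+1+1) = min (k.1+1) (i.1+1) + 1 := by omega
  rw [hmin]
  rcases le_total (k.1+1) (i.1+1) with h | h
  · rw [min_eq_left h]
    exact step2 hlam (Nat.le_add_left 1 k.1) h
  · rw [min_eq_right h]
    have := step2 hlam (Nat.le_add_left 1 i.1) h
    linarith [this]

/-! ### Supremum machinery -/

section sup
variable {n : ℕ} (M : Matrix (Fin n) (Fin n) ℝ)

lemma qform_expand (t : Fin n → ℝ) :
    t ⬝ᵥ M.mulVec t = ∑ k, ∑ i, M k i * (t k * t i) := by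
  simp only [dotProduct, mulVec, Finset.mul_sum]
  apply Finset.sum_congr rfl
  intro k _
  apply Finset.sum_congr rfl
  intro i _
  ring

lemma qform_continuous : Continuous (fun t : Fin n → ℝ => t ⬝ᵥ M.mulVec t) := by
  have : (fun t : Fin n → ℝ => t ⬝ᵥ M.mulVec t) =
      fun t => ∑ k, ∑ i, M k i * (t k * t i) := by
    funext t; exact qform_expand M t
  rw [this]
  exact continuous_finset_sum _ fun k _ => continuous_finset_sum _ fun i _ =>
    continuous_const.mul ((continuous_apply k).mul (continuous_apply i))

lemma sphere_compact : IsCompact {t : Fin n → ℝ | (∑ j, (t j)^2) = 1} := by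
  apply Metric.isCompact_of_isClosed_isBounded
  · exact isClosed_eq (continuous_finset_sum _ fun j _ => (continuous_apply j).pow 2)
      continuous_const
  · apply Bornology.IsBounded.subset (Metric.isBounded_closedBall (x := (0 : Fin n → ℝ)) (r := 1))
    intro t ht
    simp only [Metric.mem_closedBall]
    rw [dist_pi_le_iff (by norm_num)]
    intro j
    simp only [Pi.zero_apply]
    rw [Real.dist_eq, sub_zero]
    rw [← Real.sqrt_one]
    have h1 : (t j)^2 ≤ 1 := by
      rw [← ht]
      exact Finset.single_le_sum (fun i _ => sq_nonneg (t i)) (Finset.mem_univ j)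
    nlinarith [abs_nonneg (t j), sq_abs (t j), Real.sqrt_one]

lemma qset_eq_image :
    {x : ℝ | ∃ t : Fin n → ℝ, (∑ j, (t j)^2) = 1 ∧ x = t ⬝ᵥ M.mulVec t} =
      (fun t : Fin n → ℝ => t ⬝ᵥ M.mulVec t) '' {t | (∑ j, (t j)^2) = 1} := by
  ext x
  simp only [Set.mem_setOf_eq, Set.mem_image]
  constructor
  · rintro ⟨t, h1, h2⟩; exact ⟨t, h1, h2.symm⟩
  · rintro ⟨t, h1, h2⟩; exact ⟨t, h1, h2.symm⟩

lemma qset_compact : IsCompact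
    {x : ℝ | ∃ t : Fin n → ℝ, (∑ j, (t j)^2) = 1 ∧ x = t ⬝ᵥ M.mulVec t} := by
  rw [qset_eq_image]
  exact (sphere_compact).image (qform_continuous M)

lemma single_mem (hn : 1 ≤ n) :
    (∑ j, ((Pi.single (⟨0, hn⟩ : Fin n) (1:ℝ) : Fin n → ℝ) j)^2) = 1 := by
  have : ∀ j, ((Pi.single (⟨0, hn⟩ : Fin n) (1:ℝ) : Fin n → ℝ) j)^2
      = if j = ⟨0, hn⟩ then 1 else 0 := by
    intro j
    rw [Pi.single_apply]
    rcases eq_or_ne j ⟨0, hn⟩ with h | h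
    · simp [h]
    · simp [h]
  rw [Finset.sum_congr rfl fun j _ => this j]
  simp

lemma qset_nonempty (hn : 1 ≤ n) :
    {x : ℝ | ∃ t : Fin n → ℝ, (∑ j, (t j)^2) = 1 ∧ x = t ⬝ᵥ M.mulVec t}.Nonempty :=
  ⟨_, Pi.single (⟨0, hn⟩ : Fin n) (1:ℝ), single_mem hn, rfl⟩

lemma maxEig_mem (hn : 1 ≤ n) : maxEig M ∈
    {x : ℝ | ∃ t : Fin n → ℝ, (∑ j, (t j)^2) = 1 ∧ x = t ⬝ᵥ M.mulVec t} :=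
  (qset_compact M).sSup_mem (qset_nonempty M hn)

lemma le_maxEig (t : Fin n → ℝ) (ht : (∑ j, (t j)^2) = 1) :
    t ⬝ᵥ M.mulVec t ≤ maxEig M :=
  le_csSup (qset_compact M).bddAbove ⟨t, ht, rfl⟩

lemma qform_single (hn : 1 ≤ n) :
    (Pi.single (⟨0, hn⟩ : Fin n) (1:ℝ) : Fin n → ℝ) ⬝ᵥ
        M.mulVec (Pi.single (⟨0, hn⟩ : Fin n) (1:ℝ))
      = M ⟨0, hn⟩ ⟨0, hn⟩ := by
  rw [qform_expand]
  rw [Finset.sum_eq_single (⟨0, hn⟩ : Fin n)]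
  · rw [Finset.sum_eq_single (⟨0, hn⟩ : Fin n)]
    · simp
    · intro i _ hi; simp [Pi.single_apply, hi]
    · simp
  · intro k _ hk
    apply Finset.sum_eq_zero
    intro i _
    simp [Pi.single_apply, hk]
  · simp

end sup

/-! ### Comparison lemmas for quadratic forms -/

section cmp
variable {n : ℕ}

lemma exists_pos_of_sum_sq {s : Fin n → ℝ} (hs : ∀ j, 0 ≤ s j)
    (h1 : (∑ j, (s j)^2) = 1) : ∃ j, 0 < s j := by
  by_contra h
  push_neg at h
  have : ∀ j, s j = 0 := fun j => le_antisymm (h j) (hs j)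
  simp [this] at h1

lemma sum_lt_sum_mat (M N : Matrix (Fin n) (Fin n) ℝ) (h : ∀ k i, M k i < N k i)
    (s : Fin n → ℝ) (hs : ∀ j, 0 ≤ s j) (hj : ∃ j, 0 < s j) :
    ∑ k, ∑ i, M k i * (s k * s i) < ∑ k, ∑ i, N k i * (s k * s i) := by
  obtain ⟨j₀, hj₀⟩ := hj
  apply Finset.sum_lt_sum
  · intro k _
    apply Finset.sum_le_sum
    intro i _
    exact mul_le_mul_of_nonneg_right (h k i).le (mul_nonneg (hs k) (hs i))
  · refine ⟨j₀, Finset.mem_univ j₀, ?_⟩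
    apply Finset.sum_lt_sum
    · intro i _
      exact mul_le_mul_of_nonneg_right (h j₀ i).le (mul_nonneg (hs j₀) (hs i))
    · exact ⟨j₀, Finset.mem_univ j₀, mul_lt_mul_of_pos_right (h j₀ j₀) (by positivity)⟩

lemma qform_le_abs (M : Matrix (Fin n) (Fin n) ℝ) (hM : ∀ k i, 0 ≤ M k i) (t : Fin n → ℝ) :
    ∑ k, ∑ i, M k i * (t k * t i) ≤ ∑ k, ∑ i, M k i * (|t k| * |t i|) := by
  apply Finset.sum_le_sum
  intro k _
  apply Finset.sum_le_sum
  intro i _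
  apply mul_le_mul_of_nonneg_left _ (hM k i)
  calc t k * t i ≤ |t k * t i| := le_abs_self _
    _ = |t k| * |t i| := abs_mul _ _

lemma embed_qform (N : Matrix (Fin (n+1)) (Fin (n+1)) ℝ) (s : Fin n → ℝ) :
    ∑ k, ∑ i, N k i * ((Fin.cons 0 s : Fin (n+1) → ℝ) k * (Fin.cons 0 s : Fin (n+1) → ℝ) i)
      = ∑ k, ∑ i, N k.succ i.succ * (s k * s i) := by
  rw [Fin.sum_univ_succ]
  have h0 : ∑ i, N 0 i * ((Fin.cons 0 s : Fin (n+1) → ℝ) 0 *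
      (Fin.cons 0 s : Fin (n+1) → ℝ) i) = 0 := by simp
  rw [h0, zero_add]
  apply Finset.sum_congr rfl
  intro k _
  rw [Fin.sum_univ_succ]
  simp [Fin.cons_succ]

lemma embed_sum_sq (s : Fin n → ℝ) :
    ∑ j, ((Fin.cons 0 s : Fin (n+1) → ℝ) j)^2 = ∑ j, (s j)^2 := by
  rw [Fin.sum_univ_succ]
  simp [Fin.cons_succ]

end cmp

/-- Lemma 3.1: `0 < ν̃_m < ν_m < ν̃_{m+1}`. -/
theorem maxEig_inequalities (lam : ℝ) (hlam : lam > -1/2) (m : ℕ) (hm : 1 ≤ m) :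
    0 < maxEig (Atmat lam m) ∧ maxEig (Atmat lam m) < maxEig (Amat lam m) ∧
      maxEig (Amat lam m) < maxEig (Atmat lam (m+1)) := by
  have hlam' : -1/2 < lam := hlam
  refine ⟨?_, ?_, ?_⟩
  · -- positivity
    have h1 := le_maxEig (Atmat lam m) _ (single_mem hm)
    rw [qform_single (Atmat lam m) hm] at h1
    exact lt_of_lt_of_le (Atmat_pos hlam' _ _) h1
  · -- ν̃_m < ν_m
    obtain ⟨t, ht1, hteq⟩ := maxEig_mem (Atmat lam m) hm
    have hs1 : (∑ j, (|t j|)^2) = 1 := by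
      simpa [sq_abs] using ht1
    calc maxEig (Atmat lam m) = t ⬝ᵥ (Atmat lam m).mulVec t := hteq
      _ = ∑ k, ∑ i, Atmat lam m k i * (t k * t i) := qform_expand _ t
      _ ≤ ∑ k, ∑ i, Atmat lam m k i * (|t k| * |t i|) :=
          qform_le_abs _ (fun k i => (Atmat_pos hlam' k i).le) t
      _ < ∑ k, ∑ i, Amat lam m k i * (|t k| * |t i|) :=
          sum_lt_sum_mat _ _ (fun k i => entry1 hlam' k i) _ (fun j => abs_nonneg _)
            (exists_pos_of_sum_sq (fun j => abs_nonneg _) hs1)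
      _ = (fun j => |t j|) ⬝ᵥ (Amat lam m).mulVec (fun j => |t j|) :=
          (qform_expand _ _).symm
      _ ≤ maxEig (Amat lam m) := le_maxEig _ _ hs1
  · -- ν_m < ν̃_{m+1}
    obtain ⟨t, ht1, hteq⟩ := maxEig_mem (Amat lam m) hm
    have hs1 : (∑ j, (|t j|)^2) = 1 := by
      simpa [sq_abs] using ht1
    have hS1 : (∑ j, ((Fin.cons 0 (fun j => |t j|) : Fin (m+1) → ℝ) j)^2) = 1 := by
      rw [embed_sum_sq]; exact hs1
    calc maxEig (Amat lam m) = t ⬝ᵥ (Amat lam m).mulVec t := hteq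
      _ = ∑ k, ∑ i, Amat lam m k i * (t k * t i) := qform_expand _ t
      _ ≤ ∑ k, ∑ i, Amat lam m k i * (|t k| * |t i|) :=
          qform_le_abs _ (fun k i => (Amat_pos hlam' k i).le) t
      _ < ∑ k, ∑ i, Atmat lam (m+1) k.succ i.succ * (|t k| * |t i|) :=
          sum_lt_sum_mat _ (fun k i => Atmat lam (m+1) k.succ i.succ)
            (fun k i => entry2 hlam' k i) _ (fun j => abs_nonneg _)
            (exists_pos_of_sum_sq (fun j => abs_nonneg _) hs1)
      _ = ∑ k, ∑ i, Atmat lam (m+1) k i *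
            ((Fin.cons 0 (fun j => |t j|) : Fin (m+1) → ℝ) k *
             (Fin.cons 0 (fun j => |t j|) : Fin (m+1) → ℝ) i) :=
          (embed_qform _ _).symm
      _ = (Fin.cons 0 (fun j => |t j|) : Fin (m+1) → ℝ) ⬝ᵥ
            (Atmat lam (m+1)).mulVec (Fin.cons 0 (fun j => |t j|)) :=
          (qform_expand _ _).symm
      _ ≤ maxEig (Atmat lam (m+1)) := le_maxEig _ _ hS1
end
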